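/- Set t₀ = t / log log t and let Z₁, Z₂, … be i.i.d. copies of Z(t). For ℓ ∈ {1,2} and every ε > 0, there exists T such that for all t ≥ T and all integers s with t₀ ≤ s ≤ t, E[(∑_{j=1}^s Z_j)^{−ℓ}] ≤ (1 + ε) / (β''·s·log t)^ℓ. -/

import Mathlib

open MeasureTheory ProbabilityTheory Real Filter

/-- `β(2) = 6/π²`. -/
noncomputable def beta2 : ℝ := 6 / Real.pi ^ 2

/-- The truncation point `t log log t + 1`. -/
noncomputable def truncpt (t : ℕ) : ℝ := (t : ℝ) * Real.log (Real.log (t : ℝ)) + 1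

/-- `P(X < x)` where `P(X = i) = β(2) i^{-2}` for integers `i ≥ 1`. -/
noncomputable def P2lt (x : ℝ) : ℝ :=
  ∑' i : ℕ, if ((i : ℝ) + 1) < x then beta2 / ((i : ℝ) + 1) ^ 2 else 0

/-- `β''(t) = β(2) / P(X < t log log t + 1)`. -/
noncomputable def betapp (t : ℕ) : ℝ := beta2 / P2lt (truncpt t)

lemma sum_inv_sq_le : ∀ n : ℕ, 1 ≤ n → ∑ i ∈ Finset.Icc 1 n, ((i:ℝ)^2)⁻¹ ≤ 2 - (n : ℝ)⁻¹ := by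
  intro n hn
  induction n, hn using Nat.le_induction with
  | base => norm_num
  | succ n hn ih =>
    rw [← Finset.Ico_add_one_right_eq_Icc, Finset.sum_Ico_succ_top (by omega), Finset.Ico_add_one_right_eq_Icc]
    have hn' : (0:ℝ) < n := by exact_mod_cast hn
    have key : ((((n:ℝ)+1))^2)⁻¹ ≤ (n:ℝ)⁻¹ - ((n:ℝ)+1)⁻¹ := by
      rw [show (n:ℝ)⁻¹ - ((n:ℝ)+1)⁻¹ = ((n:ℝ)*((n:ℝ)+1))⁻¹ by field_simp; ring]
      gcongr
      nlinarith
    push_cast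
    push_cast at ih
    linarith


lemma integral_comp_finset {Ω : Type*} [MeasurableSpace Ω] (μ : Measure Ω) [IsFiniteMeasure μ]
    (W : Ω → ℕ) (hW : Measurable W) (F : Finset ℕ) (hF : ∀ ω, W ω ∈ F) (f : ℕ → ℝ) :
    ∫ ω, f (W ω) ∂μ = ∑ i ∈ F, f i * (μ {ω | W ω = i}).toReal := by
  have hpt : ∀ ω, f (W ω) = ∑ i ∈ F, Set.indicator {ω | W ω = i} (fun _ => f i) ω := by
    intro ω
    rw [Finset.sum_eq_single (W ω)]
    · simp [Set.indicator_of_mem, Set.mem_setOf_eq]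
    · intro b _ hb
      apply Set.indicator_of_notMem
      simp [Set.mem_setOf_eq]
      omega
    · intro h; exact absurd (hF ω) h
  have hms : ∀ i : ℕ, MeasurableSet {ω | W ω = i} := fun i => hW (measurableSet_singleton i)
  calc ∫ ω, f (W ω) ∂μ = ∫ ω, ∑ i ∈ F, Set.indicator {ω | W ω = i} (fun _ => f i) ω ∂μ := by
        exact integral_congr_ae (Filter.Eventually.of_forall hpt)
    _ = ∑ i ∈ F, ∫ ω, Set.indicator {ω | W ω = i} (fun _ => f i) ω ∂μ := by
        apply integral_finset_sum
        intro i _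
        exact (integrable_const (f i)).indicator (hms i)
    _ = ∑ i ∈ F, f i * (μ {ω | W ω = i}).toReal := by
        refine Finset.sum_congr rfl fun i _ => ?_
        rw [integral_indicator_const _ (hms i), smul_eq_mul, mul_comm]; rfl

noncomputable def Kt (t : ℕ) : ℕ := ⌈truncpt t⌉₊
noncomputable def Ht (t : ℕ) : ℝ := ∑ i ∈ Finset.Ico 1 (Kt t), ((i:ℝ))⁻¹

lemma log_gt_one {t : ℕ} (ht : 3 ≤ t) : 1 < Real.log t := by
  rw [Real.lt_log_iff_exp_lt (by positivity : (0:ℝ) < (t:ℕ))]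
  calc Real.exp 1 < 2.7182818286 := Real.exp_one_lt_d9
    _ ≤ 3 := by norm_num
    _ ≤ (t:ℝ) := by exact_mod_cast ht

lemma truncpt_gt_one {t : ℕ} (ht : 3 ≤ t) : 1 < truncpt t := by
  have h1 : 0 < Real.log (Real.log t) := Real.log_pos (log_gt_one ht)
  have h2 : (0:ℝ) < t := by positivity
  unfold truncpt; nlinarith

lemma Kt_ge_two {t : ℕ} (ht : 3 ≤ t) : 2 ≤ Kt t := by
  have h := (Nat.lt_ceil (n := 1) (a := truncpt t)).2 (by exact_mod_cast truncpt_gt_one ht)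
  unfold Kt; omega

lemma mem_IcoKt {t : ℕ} {i : ℕ} : i ∈ Finset.Ico 1 (Kt t) ↔ 1 ≤ i ∧ (i:ℝ) < truncpt t := by
  rw [Finset.mem_Ico]
  exact and_congr_right fun _ => Nat.lt_ceil


section SingleT

variable {Ω : Type*} [MeasurableSpace Ω] {μ : Measure Ω} [IsProbabilityMeasure μ]
  {W : ℕ → Ω → ℕ} {t : ℕ}

-- abbreviations for the hypotheses
variable (hWmeas : ∀ i, Measurable (W i))
  (hWsupp : ∀ i ω, 1 ≤ W i ω ∧ ((W i ω : ℝ) < truncpt t))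
  (hWdist : ∀ i_0 i : ℕ, 1 ≤ i → (i : ℝ) < truncpt t →
      μ {ω | W i_0 ω = i} = ENNReal.ofReal (betapp t / (i : ℝ) ^ 2))

include hWsupp in
lemma W_mem (i : ℕ) (ω : Ω) : W i ω ∈ Finset.Ico 1 (Kt t) :=
  mem_IcoKt.2 ⟨(hWsupp i ω).1, (hWsupp i ω).2⟩

include hWmeas hWsupp in
lemma integral_W (f : ℕ → ℝ) (j : ℕ) :
    ∫ ω, f (W j ω) ∂μ = ∑ i ∈ Finset.Ico 1 (Kt t), f i * (μ {ω | W j ω = i}).toReal :=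
  integral_comp_finset μ (W j) (hWmeas j) _ (W_mem hWsupp j) f

include hWmeas hWsupp hWdist in
lemma integral_W' (f : ℕ → ℝ) (j : ℕ) :
    ∫ ω, f (W j ω) ∂μ =
      ∑ i ∈ Finset.Ico 1 (Kt t), f i * (ENNReal.ofReal (betapp t / (i : ℝ) ^ 2)).toReal := by
  rw [integral_W hWmeas hWsupp f j]
  refine Finset.sum_congr rfl fun i hi => ?_
  obtain ⟨h1, h2⟩ := mem_IcoKt.1 hi
  rw [hWdist j i h1 h2]

include hWmeas hWsupp hWdist in
lemma betapp_pos (ht : 3 ≤ t) : 0 < betapp t := by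
  by_contra hle
  push_neg at hle
  have h1 : ∫ (_ : Ω), (1:ℝ) ∂μ = 1 := by simp
  have h2 := integral_W' hWmeas hWsupp hWdist (fun _ => (1:ℝ)) 0
  rw [h1] at h2
  have h3 : ∀ i ∈ Finset.Ico 1 (Kt t),
      (1:ℝ) * (ENNReal.ofReal (betapp t / (i : ℝ) ^ 2)).toReal = 0 := by
    intro i hi
    obtain ⟨h1', _⟩ := mem_IcoKt.1 hi
    have : betapp t / (i:ℝ)^2 ≤ 0 := by
      apply div_nonpos_of_nonpos_of_nonneg hle (by positivity)
    rw [ENNReal.ofReal_eq_zero.2 this]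
    simp
  rw [Finset.sum_congr rfl h3] at h2
  simp at h2

include hWmeas hWsupp hWdist in
lemma sum_pmf (ht : 3 ≤ t) : ∑ i ∈ Finset.Ico 1 (Kt t), betapp t / (i : ℝ) ^ 2 = 1 := by
  have h1 : ∫ (_ : Ω), (1:ℝ) ∂μ = 1 := by simp
  have h2 := integral_W' hWmeas hWsupp hWdist (fun _ => (1:ℝ)) 0
  rw [h1] at h2
  have hb := betapp_pos hWmeas hWsupp hWdist ht
  symm
  rw [h2]
  refine Finset.sum_congr rfl fun i hi => ?_
  rw [ENNReal.toReal_ofReal (by positivity), one_mul]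

include hWmeas hWsupp hWdist in
lemma betapp_bounds (ht : 3 ≤ t) : 1/2 ≤ betapp t ∧ betapp t ≤ 1 := by
  have hs := sum_pmf hWmeas hWsupp hWdist ht
  have hb := betapp_pos hWmeas hWsupp hWdist ht
  have hfact : ∑ i ∈ Finset.Ico 1 (Kt t), betapp t / (i : ℝ) ^ 2
      = betapp t * ∑ i ∈ Finset.Ico 1 (Kt t), ((i:ℝ)^2)⁻¹ := by
    rw [Finset.mul_sum]; refine Finset.sum_congr rfl fun i _ => ?_; rw [div_eq_mul_inv]
  rw [hfact] at hs
  set A := ∑ i ∈ Finset.Ico 1 (Kt t), ((i:ℝ)^2)⁻¹ with hA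
  have hK2 := Kt_ge_two (t := t) ht
  have hA1 : 1 ≤ A := by
    have h1mem : (1:ℕ) ∈ Finset.Ico 1 (Kt t) := by rw [Finset.mem_Ico]; omega
    calc (1:ℝ) = (((1:ℕ):ℝ)^2)⁻¹ := by norm_num
      _ ≤ A := Finset.single_le_sum (f := fun i : ℕ => ((i:ℝ)^2)⁻¹)
          (fun i _ => by positivity) h1mem
  have hA2 : A ≤ 2 := by
    have : Finset.Ico 1 (Kt t) = Finset.Icc 1 (Kt t - 1) := by
      rw [← Finset.Ico_add_one_right_eq_Icc]; congr 1; omega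
    rw [hA, this]
    have := sum_inv_sq_le (Kt t - 1) (by omega)
    have hpos : (0:ℝ) < ((Kt t - 1 : ℕ):ℝ)⁻¹ := by
      have : (0:ℝ) < ((Kt t - 1 : ℕ):ℝ) := by exact_mod_cast Nat.sub_pos_of_lt (by omega)
      positivity
    linarith
  constructor
  · nlinarith
  · nlinarith

include hWmeas hWsupp hWdist in
lemma EW (ht : 3 ≤ t) (j : ℕ) : ∫ ω, ((W j ω : ℝ)) ∂μ = betapp t * Ht t := by
  have hb := betapp_pos hWmeas hWsupp hWdist ht
  have h := integral_W' hWmeas hWsupp hWdist (fun n => (n:ℝ)) j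
  rw [h, Ht, Finset.mul_sum]
  refine Finset.sum_congr rfl fun i hi => ?_
  obtain ⟨h1, _⟩ := mem_IcoKt.1 hi
  have hi0 : (0:ℝ) < (i:ℝ) := by exact_mod_cast h1
  rw [ENNReal.toReal_ofReal (by positivity)]
  field_simp

include hWmeas hWsupp hWdist in
lemma EW2 (ht : 3 ≤ t) (j : ℕ) :
    ∫ ω, ((W j ω : ℝ))^2 ∂μ = betapp t * ((Kt t : ℝ) - 1) := by
  have hb := betapp_pos hWmeas hWsupp hWdist ht
  have h := integral_W' hWmeas hWsupp hWdist (fun n => ((n:ℝ))^2) j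
  rw [h]
  have : ∀ i ∈ Finset.Ico 1 (Kt t),
      ((i:ℝ))^2 * (ENNReal.ofReal (betapp t / (i : ℝ) ^ 2)).toReal = betapp t := by
    intro i hi
    obtain ⟨h1, _⟩ := mem_IcoKt.1 hi
    have hi0 : (0:ℝ) < (i:ℝ) := by exact_mod_cast h1
    rw [ENNReal.toReal_ofReal (by positivity)]
    field_simp
  rw [Finset.sum_congr rfl this, Finset.sum_const, Nat.card_Ico, nsmul_eq_mul]
  have hK2 := Kt_ge_two (t := t) ht
  have : ((Kt t - 1 : ℕ) : ℝ) = (Kt t : ℝ) - 1 := by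
    push_cast [Nat.cast_sub (by omega : 1 ≤ Kt t)]; ring
  rw [this]; ring

include hWmeas hWsupp in
lemma memW (j : ℕ) : MemLp (fun ω => ((W j ω : ℝ))) 2 μ := by
  have hm : Measurable (fun ω => ((W j ω : ℝ))) :=
    measurable_from_top.comp (hWmeas j)
  refine MemLp.mono_exponent (q := ⊤) ?_ le_top
  refine memLp_top_of_bound hm.aestronglyMeasurable (Kt t) (ae_of_all _ fun ω => ?_)
  have h := W_mem hWsupp j ω
  rw [Finset.mem_Ico] at h
  rw [Real.norm_eq_abs, abs_of_nonneg (by positivity)]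
  exact_mod_cast h.2.le

include hWmeas hWsupp hWdist in
lemma varW (ht : 3 ≤ t) (j : ℕ) :
    variance (fun ω => ((W j ω : ℝ))) μ ≤ betapp t * ((Kt t : ℝ) - 1) := by
  refine le_trans (variance_le_expectation_sq (memW hWmeas hWsupp j).aestronglyMeasurable) ?_
  rw [← EW2 hWmeas hWsupp hWdist ht j]
  apply le_of_eq
  rfl

variable (hWindep : iIndepFun W μ)

include hWmeas hWsupp hWdist hWindep in
lemma core (ht : 3 ≤ t) (F : Finset ℕ) (hF : 1 ≤ F.card) (δ : ℝ) (hδ : 0 < δ) (hδ' : δ ≤ 1/2) :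
    ∫ ω, (∑ j ∈ F, (W j ω : ℝ))⁻¹ ∂μ ≤
      ((1-δ) * ((F.card : ℝ) * (betapp t * Ht t)))⁻¹ +
      (F.card : ℝ)⁻¹ * ((F.card : ℝ) * (betapp t * ((Kt t : ℝ) - 1)) /
        (δ * ((F.card : ℝ) * (betapp t * Ht t)))^2) := by
  classical
  set n : ℝ := (F.card : ℝ) with hn
  have hn1 : (1:ℝ) ≤ n := by rw [hn]; exact_mod_cast hF
  have hb := betapp_pos hWmeas hWsupp hWdist ht
  have hK2 := Kt_ge_two (t := t) ht
  have hH1 : 1 ≤ Ht t := by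
    have h1mem : (1:ℕ) ∈ Finset.Ico 1 (Kt t) := by rw [Finset.mem_Ico]; omega
    calc (1:ℝ) = (((1:ℕ):ℝ))⁻¹ := by norm_num
      _ ≤ Ht t := Finset.single_le_sum (f := fun i : ℕ => ((i:ℝ))⁻¹)
          (fun i _ => by positivity) h1mem
  have hM1 : (1:ℝ) ≤ (Kt t : ℝ) - 1 := by
    have : (2:ℝ) ≤ (Kt t : ℝ) := by exact_mod_cast hK2
    linarith
  set S : Ω → ℝ := fun ω => ∑ j ∈ F, (W j ω : ℝ) with hS
  have hWm : ∀ j : ℕ, Measurable (fun ω => ((W j ω : ℝ))) :=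
    fun j => measurable_from_top.comp (hWmeas j)
  have hSmeas : Measurable S := Finset.measurable_sum F (fun j _ => hWm j)
  have hSn : ∀ ω, n ≤ S ω := by
    intro ω
    have := Finset.card_nsmul_le_sum F (fun j => ((W j ω : ℝ))) 1
      (fun j _ => by exact Nat.one_le_cast.2 (hWsupp j ω).1)
    simpa [nsmul_eq_mul] using this
  have hSpos : ∀ ω, 0 < S ω := fun ω => lt_of_lt_of_le (by linarith) (hSn ω)
  have hIntW : ∀ j : ℕ, Integrable (fun ω => ((W j ω : ℝ))) μ :=
    fun j => (memW hWmeas hWsupp j).integrable one_le_two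
  have hES : ∫ ω, S ω ∂μ = n * (betapp t * Ht t) := by
    rw [hS]
    rw [integral_finset_sum F (fun j _ => hIntW j)]
    rw [Finset.sum_congr rfl (fun j _ => EW hWmeas hWsupp hWdist ht j)]
    rw [Finset.sum_const, nsmul_eq_mul]
  have hMem2S : MemLp S 2 μ :=
    memLp_finset_sum F (fun j _ => memW hWmeas hWsupp j)
  have hRindep : iIndepFun (fun j ω => ((W j ω : ℝ))) μ :=
    hWindep.comp (fun _ n => (n : ℝ)) (fun _ => measurable_from_top)
  have hVarS : variance S μ ≤ n * (betapp t * ((Kt t : ℝ) - 1)) := by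
    have hfun : S = ∑ j ∈ F, (fun ω => ((W j ω : ℝ))) := by
      ext ω; rw [hS]; simp
    rw [hfun]
    rw [IndepFun.variance_sum (fun j _ => memW hWmeas hWsupp j)
      (fun i _ j _ hij => hRindep.indepFun hij)]
    calc ∑ j ∈ F, variance (fun ω => ((W j ω : ℝ))) μ
        ≤ ∑ j ∈ F, betapp t * ((Kt t : ℝ) - 1) :=
          Finset.sum_le_sum (fun j _ => varW hWmeas hWsupp hWdist ht j)
      _ = n * (betapp t * ((Kt t : ℝ) - 1)) := by rw [Finset.sum_const, nsmul_eq_mul]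
  set Eb : ℝ := n * (betapp t * Ht t) with hEb
  have hEbpos : 0 < Eb := by positivity
  set c : ℝ := δ * Eb with hc
  have hcpos : 0 < c := by positivity
  set c' : ℝ := (1-δ) * Eb with hc'
  have hc'pos : 0 < c' := by
    apply mul_pos (by linarith) hEbpos
  set bad : Set Ω := {ω | S ω < c'} with hbad
  have hbadmeas : MeasurableSet bad := hSmeas measurableSet_Iio
  have hcheb : μ bad ≤ ENNReal.ofReal (n * (betapp t * ((Kt t : ℝ) - 1)) / c^2) := by
    have hsub : bad ⊆ {ω | c ≤ |S ω - ∫ x, S x ∂μ|} := by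
      intro ω hω
      simp only [hbad, Set.mem_setOf_eq] at hω ⊢
      rw [hES]
      rw [hc'] at hω
      rw [abs_sub_comm, abs_of_nonneg (by nlinarith)]
      rw [hc]
      nlinarith
    calc μ bad ≤ μ {ω | c ≤ |S ω - ∫ x, S x ∂μ|} := measure_mono hsub
      _ ≤ ENNReal.ofReal (variance S μ / c^2) := meas_ge_le_variance_div_sq hMem2S hcpos
      _ ≤ ENNReal.ofReal (n * (betapp t * ((Kt t : ℝ) - 1)) / c^2) := by
          apply ENNReal.ofReal_le_ofReal
          gcongr
  have hbadR : (μ bad).toReal ≤ n * (betapp t * ((Kt t : ℝ) - 1)) / c^2 :=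
    ENNReal.toReal_le_of_le_ofReal (by positivity) hcheb
  have hInt : Integrable (fun ω => (S ω)⁻¹) μ := by
    refine MemLp.integrable le_top ?_
    refine memLp_top_of_bound (hSmeas.inv).aestronglyMeasurable 1 (ae_of_all _ fun ω => ?_)
    rw [Real.norm_eq_abs, abs_of_nonneg (inv_nonneg.2 (hSpos ω).le)]
    exact inv_le_one_of_one_le₀ (le_trans hn1 (hSn ω))
  have hsplit : ∫ ω, (S ω)⁻¹ ∂μ
      = (∫ ω in bad, (S ω)⁻¹ ∂μ) + ∫ ω in badᶜ, (S ω)⁻¹ ∂μ :=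
    (integral_add_compl hbadmeas hInt).symm
  have hgood : ∫ ω in badᶜ, (S ω)⁻¹ ∂μ ≤ c'⁻¹ := by
    calc ∫ ω in badᶜ, (S ω)⁻¹ ∂μ ≤ ∫ _ω in badᶜ, c'⁻¹ ∂μ := by
          apply setIntegral_mono_on hInt.integrableOn (integrableOn_const
            (measure_ne_top μ _) enorm_ne_top) hbadmeas.compl
          intro ω hω
          simp only [hbad, Set.mem_compl_iff, Set.mem_setOf_eq, not_lt] at hω
          exact inv_anti₀ hc'pos hω
      _ = (μ badᶜ).toReal * c'⁻¹ := by rw [setIntegral_const, smul_eq_mul]; rfl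
      _ ≤ 1 * c'⁻¹ := by
          apply mul_le_mul_of_nonneg_right _ (by positivity)
          exact ENNReal.toReal_le_of_le_ofReal one_pos.le (by simpa using prob_le_one)
      _ = c'⁻¹ := one_mul _
  have hbadint : ∫ ω in bad, (S ω)⁻¹ ∂μ ≤ n⁻¹ * (μ bad).toReal := by
    calc ∫ ω in bad, (S ω)⁻¹ ∂μ ≤ ∫ _ω in bad, n⁻¹ ∂μ := by
          apply setIntegral_mono_on hInt.integrableOn (integrableOn_const
            (measure_ne_top μ _) enorm_ne_top) hbadmeas
          intro ω _
          exact inv_anti₀ (by linarith) (hSn ω)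
      _ = (μ bad).toReal * n⁻¹ := by rw [setIntegral_const, smul_eq_mul]; rfl
      _ = n⁻¹ * (μ bad).toReal := mul_comm _ _
  calc ∫ ω, (S ω)⁻¹ ∂μ = (∫ ω in bad, (S ω)⁻¹ ∂μ) + ∫ ω in badᶜ, (S ω)⁻¹ ∂μ := hsplit
    _ ≤ n⁻¹ * (μ bad).toReal + c'⁻¹ := add_le_add hbadint hgood
    _ ≤ n⁻¹ * (n * (betapp t * ((Kt t : ℝ) - 1)) / c^2) + c'⁻¹ := by
        apply add_le_add_left
        apply mul_le_mul_of_nonneg_left hbadR (by positivity)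
    _ = c'⁻¹ + n⁻¹ * (n * (betapp t * ((Kt t : ℝ) - 1)) / c^2) := add_comm _ _

end SingleT

lemma tendsto_logn : Tendsto (fun t:ℕ => Real.log t) atTop atTop :=
  Real.tendsto_log_atTop.comp tendsto_natCast_atTop_atTop

lemma tendsto_llt : Tendsto (fun t:ℕ => Real.log (Real.log t)) atTop atTop :=
  Real.tendsto_log_atTop.comp tendsto_logn

lemma tendsto_llt_sq_div_log :
    Tendsto (fun t:ℕ => (Real.log (Real.log t))^2 / Real.log t) atTop (nhds 0) := by
  have h0 : Tendsto (fun x:ℝ => Real.log x ^ 2 / x) atTop (nhds 0) := by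
    have := Real.tendsto_pow_log_div_mul_add_atTop 1 0 2 one_ne_zero
    simpa using this
  exact h0.comp tendsto_logn

lemma eventually_llt_mul_le (C : ℝ) : ∀ᶠ t:ℕ in atTop, C * Real.log (Real.log t) ≤ t := by
  set C' : ℝ := max C 1 with hC'
  have hC'pos : 0 < C' := lt_of_lt_of_le one_pos (le_max_right _ _)
  have h1 : ∀ᶠ t:ℕ in atTop, 1 ≤ Real.log (Real.log t) := tendsto_llt.eventually_ge_atTop 1
  have h1' : ∀ᶠ t:ℕ in atTop, 1 ≤ Real.log t := tendsto_logn.eventually_ge_atTop 1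
  have h2 : ∀ᶠ t:ℕ in atTop, Real.log t / (t:ℝ) < 1/C' := by
    have h0 : Tendsto (fun x:ℝ => Real.log x / x) atTop (nhds 0) := by
      have := Real.tendsto_pow_log_div_mul_add_atTop 1 0 1 one_ne_zero
      simpa using this
    exact (h0.comp tendsto_natCast_atTop_atTop).eventually_lt_const (by positivity)
  have h3 : ∀ᶠ t:ℕ in atTop, 1 ≤ t := eventually_ge_atTop 1
  filter_upwards [h1, h1', h2, h3] with t hl1 hl1' hl2 ht1
  have htpos : (0:ℝ) < t := by exact_mod_cast ht1
  have hlog_le : Real.log (Real.log t) ≤ Real.log t := by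
    have := Real.log_le_sub_one_of_pos (x := Real.log t) (by linarith)
    linarith
  have hstep : C' * Real.log t ≤ t := by
    rw [div_lt_div_iff₀ htpos hC'pos] at hl2
    nlinarith
  calc C * Real.log (Real.log t) ≤ C' * Real.log (Real.log t) := by
        apply mul_le_mul_of_nonneg_right (le_max_left _ _) (by linarith)
    _ ≤ C' * Real.log t := by apply mul_le_mul_of_nonneg_left hlog_le hC'pos.le
    _ ≤ t := hstep

set_option maxHeartbeats 1000000 in
lemma L1 {Ω : Type*} [MeasurableSpace Ω] (μ : Measure Ω) [IsProbabilityMeasure μ]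
    (Z : ℕ → ℕ → Ω → ℕ) (hmeas : ∀ t i, Measurable (Z t i))
    (hsupp : ∀ t : ℕ, 3 ≤ t → ∀ i ω, 1 ≤ Z t i ω ∧ (Z t i ω : ℝ) < truncpt t)
    (hdist : ∀ t : ℕ, 3 ≤ t → ∀ i_0 : ℕ, ∀ i : ℕ, 1 ≤ i → (i : ℝ) < truncpt t →
      μ {ω | Z t i_0 ω = i} = ENNReal.ofReal (betapp t / (i : ℝ) ^ 2))
    (hindep : ∀ t : ℕ, 3 ≤ t → iIndepFun (Z t) μ)
    (ε : ℝ) (hε : 0 < ε) (hε1 : ε ≤ 1) :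
    ∃ T : ℕ, ∀ t : ℕ, T ≤ t → ∀ F : Finset ℕ,
      (t : ℝ) / (3 * Real.log (Real.log t)) ≤ (F.card : ℝ) → (F.card : ℝ) ≤ t →
      ∫ ω, (∑ j ∈ F, (Z t j ω : ℝ))⁻¹ ∂μ ≤
        (1 + ε) / (betapp t * (F.card : ℝ) * Real.log t) := by
  set δ : ℝ := ε/4 with hδdef
  have hδpos : 0 < δ := by positivity
  have hδhalf : δ ≤ 1/2 := by rw [hδdef]; linarith
  clear_value δ
  have E1 : ∀ᶠ t:ℕ in atTop, 3 ≤ t := eventually_ge_atTop 3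
  have E2 : ∀ᶠ t:ℕ in atTop, 1 ≤ Real.log (Real.log t) := tendsto_llt.eventually_ge_atTop 1
  have E3 : ∀ᶠ t:ℕ in atTop,
      (Real.log (Real.log t))^2 / Real.log t < ε * δ^2 / 24 :=
    tendsto_llt_sq_div_log.eventually_lt_const (by positivity)
  obtain ⟨T, hT⟩ := eventually_atTop.1 (E1.and (E2.and E3))
  refine ⟨T, fun t ht F hcard1 hcard2 => ?_⟩
  obtain ⟨h3t, hllt1, he3⟩ := hT t ht
  set llt : ℝ := Real.log (Real.log t) with hlltdef
  set L : ℝ := Real.log t with hLdef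
  have hL : 1 < L := log_gt_one h3t
  have htpos : (0:ℝ) < t := by positivity
  have ht3R : (3:ℝ) ≤ t := by exact_mod_cast h3t
  have hlltpos : 0 < llt := by linarith
  have hnpos : (0:ℝ) < F.card :=
    lt_of_lt_of_le (by positivity) hcard1
  have hncard : 1 ≤ F.card := by exact_mod_cast Nat.one_le_iff_ne_zero.2 (by
    intro h; rw [h] at hnpos; simp at hnpos)
  set n : ℝ := (F.card : ℝ) with hndef
  have hn1 : (1:ℝ) ≤ n := by rw [hndef]; exact_mod_cast hncard
  have hWsupp := hsupp t h3t
  have hWdist := hdist t h3t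
  obtain ⟨hb_lo, hb_hi⟩ := betapp_bounds (hmeas t) hWsupp hWdist h3t
  have hbpos : 0 < betapp t := by linarith
  set β : ℝ := betapp t with hβdef
  set H : ℝ := Ht t with hHdef
  have hK2 := Kt_ge_two (t := t) h3t
  -- H ≥ L
  have htrunc1 : 1 < truncpt t := truncpt_gt_one h3t
  have hHL : L ≤ H := by
    have hHarm : H = ((harmonic (Kt t - 1) : ℚ) : ℝ) := by
      rw [hHdef, Ht, Finset.sum_Ico_eq_sum_range, harmonic]
      push_cast
      refine Finset.sum_congr rfl fun i _ => ?_
      rw [add_comm]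
    have s1 : L ≤ Real.log (truncpt t) := by
      apply Real.log_le_log htpos
      rw [truncpt]
      nlinarith
    have s2 : Real.log (truncpt t) ≤ Real.log (Kt t) := by
      apply Real.log_le_log (by linarith)
      exact Nat.le_ceil _
    have s3 : Real.log (Kt t) ≤ H := by
      rw [hHarm]
      have := log_add_one_le_harmonic (Kt t - 1)
      have hcast : ((Kt t - 1 + 1 : ℕ) : ℝ) = ((Kt t : ℕ) : ℝ) := by
        congr 1; omega
      rw [hcast] at this
      exact this
    linarith
  have hHpos : 0 < H := by linarith
  set M : ℝ := (Kt t : ℝ) - 1 with hMdef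
  have hM1 : (1:ℝ) ≤ M := by
    have : (2:ℝ) ≤ (Kt t : ℝ) := by exact_mod_cast hK2
    rw [hMdef]; linarith
  have hM2 : M ≤ 2 * t * llt := by
    have hceil : (Kt t : ℝ) < truncpt t + 1 := Nat.ceil_lt_add_one (by linarith)
    have : truncpt t = (t:ℝ) * llt + 1 := rfl
    rw [hMdef]
    nlinarith
  -- apply core
  have hcore := core (hmeas t) hWsupp hWdist (hindep t h3t) h3t F hncard δ hδpos hδhalf
  rw [← hβdef, ← hHdef, ← hndef, ← hMdef] at hcore
  refine le_trans hcore ?_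
  have ht3lln : (t:ℝ) ≤ 3 * llt * n := by
    rw [div_le_iff₀ (by positivity)] at hcard1
    linarith [hcard1]
  have he3' : llt^2 ≤ ε * δ^2 / 24 * L := by
    rw [div_lt_iff₀ (by linarith)] at he3
    linarith
  have hLpos : (0:ℝ) < L := by linarith
  clear_value llt L n β H M
  have P1 : ((1-δ) * (n * (β * H)))⁻¹ ≤ (1 + ε/2) / (β * n * L) := by
    have hden1 : 0 < (1-δ) * (n * (β * H)) :=
      mul_pos (by linarith only [hδhalf]) (by positivity)
    rw [inv_eq_one_div, div_le_div_iff₀ hden1 (by positivity)]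
    have hsq : ε^2 ≤ ε := by
      rw [pow_two]; exact mul_le_of_le_one_right hε.le hε1
    have k2 : 1 ≤ (1 + ε/2) * (1 - δ) := by
      have hexp : (1 + ε/2) * (1 - ε/4) = 1 + ε/4 - ε^2/8 := by ring
      rw [hδdef, hexp]
      linarith only [hsq, hε]
    calc 1 * (β * n * L) = β * n * L := one_mul _
      _ ≤ β * n * H := mul_le_mul_of_nonneg_left hHL (by positivity)
      _ ≤ ((1 + ε/2) * (1 - δ)) * (β * n * H) :=
          le_mul_of_one_le_left (by positivity) k2
      _ = (1 + ε/2) * ((1-δ) * (n * (β * H))) := by ring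
  have P2 : n⁻¹ * (n * (β * M) / (δ * (n * (β * H)))^2) ≤ (ε/2) / (β * n * L) := by
    have hsimp : n⁻¹ * (n * (β * M) / (δ * (n * (β * H)))^2)
        = M / (δ^2 * β * H^2 * n^2) := by
      field_simp
    rw [hsimp, div_le_div_iff₀ (by positivity) (by positivity)]
    have c1 : M * (n * L) ≤ (2 * t * llt) * (n * L) :=
      mul_le_mul_of_nonneg_right hM2 (by positivity)
    have c2 : (2 * (t:ℝ) * llt) * (n * L) ≤ (2 * (3 * llt * n) * llt) * (n * L) := by
      have step : 2 * (t:ℝ) * llt ≤ 2 * (3 * llt * n) * llt := by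
        calc 2 * (t:ℝ) * llt = (2 * llt) * t := by ring
          _ ≤ (2 * llt) * (3 * llt * n) :=
              mul_le_mul_of_nonneg_left ht3lln (by positivity)
          _ = 2 * (3 * llt * n) * llt := by ring
      exact mul_le_mul_of_nonneg_right step (by positivity)
    have c3 : (2 * (3 * llt * n) * llt) * (n * L) = 6 * llt^2 * (n^2 * L) := by ring
    have c4 : 6 * llt^2 * (n^2 * L) ≤ 6 * (ε * δ^2/24 * L) * (n^2 * L) := by
      apply mul_le_mul_of_nonneg_right _ (by positivity)
      linarith only [he3']
    have c5a : L * L ≤ H * H := mul_self_le_mul_self (by linarith only [hL]) hHL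
    have c5 : 6 * (ε * δ^2/24 * L) * (n^2 * L) ≤ (ε/2) * (δ^2 * H^2 * n^2) := by
      calc 6 * (ε * δ^2/24 * L) * (n^2 * L) = ε * δ^2/4 * n^2 * (L * L) := by ring
        _ ≤ ε * δ^2/4 * n^2 * (H * H) :=
            mul_le_mul_of_nonneg_left c5a (by positivity)
        _ = (ε/4) * (δ^2 * H^2 * n^2) := by ring
        _ ≤ (ε/2) * (δ^2 * H^2 * n^2) :=
            mul_le_mul_of_nonneg_right (by linarith only [hε]) (by positivity)
    have main : M * (n * L) ≤ (ε/2) * (δ^2 * H^2 * n^2) := by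
      linarith only [c1, c2, c3, c4, c5]
    calc M * (β * n * L) = β * (M * (n * L)) := by ring
      _ ≤ β * ((ε/2) * (δ^2 * H^2 * n^2)) := mul_le_mul_of_nonneg_left main hbpos.le
      _ = (ε/2) * (δ^2 * β * H^2 * n^2) := by ring
  calc ((1-δ) * (n * (β * H)))⁻¹ + n⁻¹ * (n * (β * M) / (δ * (n * (β * H)))^2)
      ≤ (1 + ε/2) / (β * n * L) + (ε/2) / (β * n * L) := add_le_add P1 P2
    _ = (1 + ε) / (β * n * L) := by rw [← add_div]; ring_nf


set_option maxHeartbeats 1000000 in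
theorem inverse_moment_bound
    {Ω : Type*} [MeasurableSpace Ω] (μ : Measure Ω) [IsProbabilityMeasure μ]
    (Z : ℕ → ℕ → Ω → ℕ) (hmeas : ∀ t i, Measurable (Z t i))
    (hsupp : ∀ t : ℕ, 3 ≤ t → ∀ i ω, 1 ≤ Z t i ω ∧ (Z t i ω : ℝ) < truncpt t)
    (hdist : ∀ t : ℕ, 3 ≤ t → ∀ i_0 : ℕ, ∀ i : ℕ, 1 ≤ i → (i : ℝ) < truncpt t →
      μ {ω | Z t i_0 ω = i} = ENNReal.ofReal (betapp t / (i : ℝ) ^ 2))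
    (hindep : ∀ t : ℕ, 3 ≤ t → iIndepFun (Z t) μ)
    (ℓ : ℕ) (hℓ : ℓ = 1 ∨ ℓ = 2) :
    ∀ ε : ℝ, 0 < ε → ∃ T : ℕ, ∀ t : ℕ, T ≤ t → ∀ s : ℕ,
      (t : ℝ) / Real.log (Real.log (t : ℝ)) ≤ (s : ℝ) → s ≤ t →
      ∫ ω, ((∑ j ∈ Finset.Icc 1 s, (Z t j ω : ℝ)) ^ ℓ)⁻¹ ∂μ ≤
        (1 + ε) / (betapp t * (s : ℝ) * Real.log (t : ℝ)) ^ ℓ := by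
  intro ε hε
  set ε' : ℝ := min ε 1 with hε'def
  have hε'pos : 0 < ε' := lt_min hε one_pos
  have hε'1 : ε' ≤ 1 := min_le_right _ _
  have hε'le : ε' ≤ ε := min_le_left _ _
  clear_value ε'
  rcases hℓ with hl | hl
  · -- ℓ = 1
    subst hl
    obtain ⟨T₁, hT₁⟩ := L1 μ Z hmeas hsupp hdist hindep ε' hε'pos hε'1
    obtain ⟨T₂, hT₂⟩ := eventually_atTop.1 (eventually_ge_atTop 3)
    refine ⟨max T₁ T₂, fun t ht s hs1 hs2 => ?_⟩
    have h3t : 3 ≤ t := hT₂ t (le_trans (le_max_right _ _) ht)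
    set llt : ℝ := Real.log (Real.log t) with hlltdef
    set L : ℝ := Real.log t with hLdef
    have hL : 1 < L := log_gt_one h3t
    have hlltpos : 0 < llt := Real.log_pos hL
    have htpos : (0:ℝ) < t := by positivity
    have hspos : (0:ℝ) < s := lt_of_lt_of_le (div_pos htpos hlltpos) hs1
    obtain ⟨hb_lo, hb_hi⟩ := betapp_bounds (hmeas t) (hsupp t h3t) (hdist t h3t) h3t
    have hbpos : 0 < betapp t := by linarith
    have hcard : ((Finset.Icc 1 s).card : ℝ) = (s:ℝ) := by
      rw [Nat.card_Icc]; push_cast; ring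
    have hcard1 : (t : ℝ) / (3 * llt) ≤ ((Finset.Icc 1 s).card : ℝ) := by
      rw [hcard]
      calc (t:ℝ)/(3*llt) ≤ (t:ℝ)/llt :=
            div_le_div_of_nonneg_left htpos.le hlltpos (by linarith)
        _ ≤ s := hs1
    have hcard2 : ((Finset.Icc 1 s).card : ℝ) ≤ (t:ℝ) := by
      rw [hcard]; exact_mod_cast hs2
    have hmain := hT₁ t (le_trans (le_max_left _ _) ht) (Finset.Icc 1 s) hcard1 hcard2
    rw [hcard] at hmain
    simp only [pow_one]
    refine le_trans hmain ?_
    have hden : 0 < betapp t * (s:ℝ) * L := by positivity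
    rw [div_le_div_iff₀ hden hden]
    exact mul_le_mul_of_nonneg_right (by linarith) hden.le
  · -- ℓ = 2
    subst hl
    obtain ⟨T₁, hT₁⟩ := L1 μ Z hmeas hsupp hdist hindep (ε'/8) (by positivity) (by linarith)
    obtain ⟨T₂, hT₂⟩ := eventually_atTop.1
      ((eventually_ge_atTop 3).and ((eventually_llt_mul_le 3).and
        (eventually_llt_mul_le (8/ε'))))
    refine ⟨max T₁ T₂, fun t ht s hs1 hs2 => ?_⟩
    obtain ⟨h3t, hE4, hE5⟩ := hT₂ t (le_trans (le_max_right _ _) ht)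
    set llt : ℝ := Real.log (Real.log t) with hlltdef
    set L : ℝ := Real.log t with hLdef
    have hL : 1 < L := log_gt_one h3t
    have hlltpos : 0 < llt := Real.log_pos hL
    have htpos : (0:ℝ) < t := by positivity
    obtain ⟨hb_lo, hb_hi⟩ := betapp_bounds (hmeas t) (hsupp t h3t) (hdist t h3t) h3t
    have hbpos : 0 < betapp t := by linarith
    have htls : (t:ℝ) ≤ (s:ℝ) * llt := by
      rw [div_le_iff₀ hlltpos] at hs1; exact hs1
    have hs8 : 8/ε' ≤ (s:ℝ) := by
      rw [div_le_iff₀ hlltpos] at hs1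
      have : 8/ε' * llt ≤ (s:ℝ) * llt := le_trans hE5 hs1
      exact le_of_mul_le_mul_right this hlltpos
    have hsR8 : (8:ℝ) ≤ (s:ℝ) := by
      refine le_trans ?_ hs8
      rw [le_div_iff₀ hε'pos]
      nlinarith
    have hs8nat : 8 ≤ s := by exact_mod_cast hsR8
    set a : ℕ := s/2 with hadef
    have haa : 2*a ≤ s ∧ s ≤ 2*a + 1 := by omega
    have ha1 : 1 ≤ a := by omega
    have has : a < s := by omega
    set F₁ : Finset ℕ := Finset.Ioc 0 a with hF₁def
    set F₂ : Finset ℕ := Finset.Ioc a s with hF₂def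
    have hcard₁ : F₁.card = a := by rw [hF₁def, Nat.card_Ioc]; omega
    have hcard₂ : F₂.card = s - a := by rw [hF₂def, Nat.card_Ioc]
    have hn2cast : ((s - a : ℕ) : ℝ) = (s:ℝ) - (a:ℝ) := by
      push_cast [Nat.cast_sub has.le]; ring
    have haR1 : (1:ℝ) ≤ (a:ℝ) := by exact_mod_cast ha1
    have h2a : (s:ℝ) - 1 ≤ 2*(a:ℝ) := by
      have h : (s:ℝ) ≤ 2*(a:ℝ)+1 := by exact_mod_cast haa.2
      linarith
    have h2a' : 2*(a:ℝ) ≤ (s:ℝ) := by exact_mod_cast haa.1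
    -- card bounds for L1
    have hc₁lo : (t : ℝ) / (3 * llt) ≤ (F₁.card : ℝ) := by
      rw [hcard₁]
      rw [div_le_iff₀ (by positivity)]
      nlinarith [hE4, htls, h2a, hlltpos.le]
    have hc₁hi : (F₁.card : ℝ) ≤ (t:ℝ) := by
      rw [hcard₁]
      have : a ≤ t := by omega
      exact_mod_cast this
    have hc₂lo : (t : ℝ) / (3 * llt) ≤ (F₂.card : ℝ) := by
      rw [hcard₂, hn2cast]
      rw [div_le_iff₀ (by positivity)]
      nlinarith [htls, h2a', hlltpos.le]
    have hc₂hi : (F₂.card : ℝ) ≤ (t:ℝ) := by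
      rw [hcard₂]
      have : s - a ≤ t := by omega
      exact_mod_cast this
    have hB1 := hT₁ t (le_trans (le_max_left _ _) ht) F₁ hc₁lo hc₁hi
    have hB2 := hT₁ t (le_trans (le_max_left _ _) ht) F₂ hc₂lo hc₂hi
    rw [hcard₁] at hB1
    rw [hcard₂, hn2cast] at hB2
    set S₁ : Ω → ℝ := fun ω => ∑ j ∈ F₁, (Z t j ω : ℝ) with hS₁def
    set S₂ : Ω → ℝ := fun ω => ∑ j ∈ F₂, (Z t j ω : ℝ) with hS₂def
    -- lower bounds
    have hS₁lb : ∀ ω, (F₁.card : ℝ) ≤ S₁ ω := by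
      intro ω
      have := Finset.card_nsmul_le_sum F₁ (fun j => ((Z t j ω : ℝ))) 1
        (fun j _ => by exact Nat.one_le_cast.2 (hsupp t h3t j ω).1)
      simpa [nsmul_eq_mul] using this
    have hS₂lb : ∀ ω, (F₂.card : ℝ) ≤ S₂ ω := by
      intro ω
      have := Finset.card_nsmul_le_sum F₂ (fun j => ((Z t j ω : ℝ))) 1
        (fun j _ => by exact Nat.one_le_cast.2 (hsupp t h3t j ω).1)
      simpa [nsmul_eq_mul] using this
    have hS₁pos : ∀ ω, 0 < S₁ ω := by
      intro ω
      refine lt_of_lt_of_le ?_ (hS₁lb ω)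
      rw [hcard₁]; exact_mod_cast ha1
    have hS₂pos : ∀ ω, 0 < S₂ ω := by
      intro ω
      refine lt_of_lt_of_le ?_ (hS₂lb ω)
      rw [hcard₂]
      have : 1 ≤ s - a := by omega
      exact_mod_cast this
    have hS₁ge1 : ∀ ω, 1 ≤ S₁ ω := by
      intro ω
      refine le_trans ?_ (hS₁lb ω)
      rw [hcard₁]; exact_mod_cast ha1
    have hS₂ge1 : ∀ ω, 1 ≤ S₂ ω := by
      intro ω
      refine le_trans ?_ (hS₂lb ω)
      rw [hcard₂]
      have : 1 ≤ s - a := by omega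
      exact_mod_cast this
    -- split of the sum
    have hsplit : ∀ ω, ∑ j ∈ Finset.Icc 1 s, (Z t j ω : ℝ) = S₁ ω + S₂ ω := by
      intro ω
      rw [hS₁def, hS₂def, hF₁def, hF₂def]
      rw [show Finset.Icc 1 s = Finset.Ioc 0 s from Finset.Icc_add_one_left_eq_Ioc 0 s]
      exact (Finset.sum_Ioc_consecutive _ (Nat.zero_le a) has.le).symm
    -- measurability
    have hZm : ∀ j : ℕ, Measurable (fun ω => ((Z t j ω : ℝ))) :=
      fun j => measurable_from_top.comp (hmeas t j)
    have hS₁meas : Measurable S₁ := Finset.measurable_sum F₁ (fun j _ => hZm j)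
    have hS₂meas : Measurable S₂ := Finset.measurable_sum F₂ (fun j _ => hZm j)
    -- independence of S₁⁻¹ and S₂⁻¹
    have hdisj : Disjoint F₁ F₂ := by
      rw [hF₁def, hF₂def, Finset.disjoint_left]
      intro x hx hx'
      rw [Finset.mem_Ioc] at hx hx'
      omega
    have hid := (hindep t h3t).indepFun_finset F₁ F₂ hdisj (hmeas t)
    have hIndInv : IndepFun (fun ω => (S₁ ω)⁻¹) (fun ω => (S₂ ω)⁻¹) μ := by
      have hg₁ : Measurable (fun v : (↥F₁ → ℕ) => (∑ i, ((v i : ℝ)))⁻¹) :=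
        (Finset.measurable_sum Finset.univ
          (fun i _ => measurable_from_top.comp (measurable_pi_apply i))).inv
      have hg₂ : Measurable (fun v : (↥F₂ → ℕ) => (∑ i, ((v i : ℝ)))⁻¹) :=
        (Finset.measurable_sum Finset.univ
          (fun i _ => measurable_from_top.comp (measurable_pi_apply i))).inv
      have := hid.comp hg₁ hg₂
      convert this using 1
      · funext ω
        simp only [Function.comp_apply, hS₁def]
        rw [← Finset.sum_coe_sort F₁ (fun j => ((Z t j ω : ℝ)))]
      · funext ω
        simp only [Function.comp_apply, hS₂def]
        rw [← Finset.sum_coe_sort F₂ (fun j => ((Z t j ω : ℝ)))]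
    -- integrability
    have hint1 : Integrable (fun ω => (S₁ ω)⁻¹) μ := by
      refine MemLp.integrable le_top ?_
      refine memLp_top_of_bound hS₁meas.inv.aestronglyMeasurable 1 (ae_of_all _ fun ω => ?_)
      rw [Real.norm_eq_abs, abs_of_nonneg (inv_nonneg.2 (hS₁pos ω).le)]
      exact inv_le_one_of_one_le₀ (hS₁ge1 ω)
    have hint2 : Integrable (fun ω => (S₂ ω)⁻¹) μ := by
      refine MemLp.integrable le_top ?_
      refine memLp_top_of_bound hS₂meas.inv.aestronglyMeasurable 1 (ae_of_all _ fun ω => ?_)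
      rw [Real.norm_eq_abs, abs_of_nonneg (inv_nonneg.2 (hS₂pos ω).le)]
      exact inv_le_one_of_one_le₀ (hS₂ge1 ω)
    have hint12 : Integrable (fun ω => (S₁ ω)⁻¹ * (S₂ ω)⁻¹) μ := by
      refine MemLp.integrable le_top ?_
      refine memLp_top_of_bound (hS₁meas.inv.mul hS₂meas.inv).aestronglyMeasurable 1
        (ae_of_all _ fun ω => ?_)
      rw [Real.norm_eq_abs, abs_of_nonneg (by positivity)]
      calc (S₁ ω)⁻¹ * (S₂ ω)⁻¹ ≤ 1 * 1 := by
            apply mul_le_mul (inv_le_one_of_one_le₀ (hS₁ge1 ω)) (inv_le_one_of_one_le₀ (hS₂ge1 ω))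
              (by positivity) (by norm_num)
        _ = 1 := by norm_num
    have hintL : Integrable (fun ω => ((S₁ ω + S₂ ω)^2)⁻¹) μ := by
      refine MemLp.integrable le_top ?_
      have hm : Measurable (fun ω => ((S₁ ω + S₂ ω)^2)⁻¹) :=
        ((hS₁meas.add hS₂meas).pow_const 2).inv
      refine memLp_top_of_bound hm.aestronglyMeasurable 1 (ae_of_all _ fun ω => ?_)
      have h1 : (1:ℝ) ≤ (S₁ ω + S₂ ω)^2 := by nlinarith [hS₁ge1 ω, hS₂ge1 ω]
      rw [Real.norm_eq_abs, abs_of_nonneg (by positivity)]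
      exact inv_le_one_of_one_le₀ h1
    -- pointwise bound
    have hpt : ∀ ω, ((S₁ ω + S₂ ω)^2)⁻¹ ≤ 4⁻¹ * ((S₁ ω)⁻¹ * (S₂ ω)⁻¹) := by
      intro ω
      have h4 : 4 * (S₁ ω * S₂ ω) ≤ (S₁ ω + S₂ ω)^2 := by
        nlinarith [sq_nonneg (S₁ ω - S₂ ω)]
      have hpos : 0 < 4 * (S₁ ω * S₂ ω) := by
        have := hS₁pos ω; have := hS₂pos ω; positivity
      calc ((S₁ ω + S₂ ω)^2)⁻¹ ≤ (4 * (S₁ ω * S₂ ω))⁻¹ := inv_anti₀ hpos h4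
        _ = 4⁻¹ * ((S₁ ω)⁻¹ * (S₂ ω)⁻¹) := by
            rw [mul_inv, mul_inv]
    -- main chain
    have hints0 : 0 ≤ ∫ ω, (S₂ ω)⁻¹ ∂μ :=
      integral_nonneg (fun ω => inv_nonneg.2 (hS₂pos ω).le)
    have hB1nn : (0:ℝ) ≤ (1 + ε'/8) / (betapp t * (a:ℝ) * L) := by positivity
    have hchain : ∫ ω, ((∑ j ∈ Finset.Icc 1 s, (Z t j ω : ℝ))^2)⁻¹ ∂μ ≤
        4⁻¹ * (((1 + ε'/8) / (betapp t * (a:ℝ) * L)) *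
          ((1 + ε'/8) / (betapp t * ((s:ℝ) - (a:ℝ)) * L))) := by
      calc ∫ ω, ((∑ j ∈ Finset.Icc 1 s, (Z t j ω : ℝ))^2)⁻¹ ∂μ
          = ∫ ω, ((S₁ ω + S₂ ω)^2)⁻¹ ∂μ := by
            refine integral_congr_ae (ae_of_all _ fun ω => ?_)
            exact congrArg (fun x : ℝ => (x^2)⁻¹) (hsplit ω)
        _ ≤ ∫ ω, 4⁻¹ * ((S₁ ω)⁻¹ * (S₂ ω)⁻¹) ∂μ := by
            apply integral_mono hintL (hint12.const_mul _) hpt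
        _ = 4⁻¹ * ∫ ω, (S₁ ω)⁻¹ * (S₂ ω)⁻¹ ∂μ := integral_const_mul _ _
        _ = 4⁻¹ * ((∫ ω, (S₁ ω)⁻¹ ∂μ) * ∫ ω, (S₂ ω)⁻¹ ∂μ) := by
            congr 1
            exact hIndInv.integral_mul_eq_mul_integral hint1.aestronglyMeasurable hint2.aestronglyMeasurable
        _ ≤ 4⁻¹ * (((1 + ε'/8) / (betapp t * (a:ℝ) * L)) *
              ((1 + ε'/8) / (betapp t * ((s:ℝ) - (a:ℝ)) * L))) := by
            apply mul_le_mul_of_nonneg_left _ (by norm_num)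
            exact mul_le_mul hB1 hB2 hints0 hB1nn
    refine le_trans hchain ?_
    -- final arithmetic
    have hn2pos : (0:ℝ) < (s:ℝ) - (a:ℝ) := by
      have h1 : (1:ℝ) ≤ ((s - a:ℕ):ℝ) := by exact_mod_cast (by omega : 1 ≤ s - a)
      rw [hn2cast] at h1
      linarith
    have hapos : (0:ℝ) < (a:ℝ) := by linarith
    have hspos : (0:ℝ) < (s:ℝ) := by linarith
    have hLpos : (0:ℝ) < L := by linarith
    have heq : 4⁻¹ * (((1 + ε'/8) / (betapp t * (a:ℝ) * L)) *
          ((1 + ε'/8) / (betapp t * ((s:ℝ) - (a:ℝ)) * L)))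
        = (1 + ε'/8)^2 / (4 * (betapp t * (a:ℝ) * L) * (betapp t * ((s:ℝ) - (a:ℝ)) * L)) := by
      field_simp
    rw [heq, div_le_div_iff₀ (by positivity) (by positivity)]
    -- (1+ε'/8)^2 * (β s L)^2 ≤ (1+ε) * (4 (β a L)(β (s-a) L))
    have hparity : (s:ℝ)^2 - 1 ≤ 4 * ((a:ℝ) * ((s:ℝ) - (a:ℝ))) := by
      nlinarith [h2a, h2a']
    have hsε : (8:ℝ) ≤ (s:ℝ) * ε' := by
      rw [div_le_iff₀ hε'pos] at hs8
      linarith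
    have hkey : (1 + ε'/8)^2 * (s:ℝ)^2 ≤ (1 + ε') * ((s:ℝ)^2 - 1) := by
      nlinarith [hsε, hsR8, hε'pos, hε'1, mul_le_mul_of_nonneg_left hsε (by linarith : (0:ℝ) ≤ (s:ℝ))]
    have hkey2 : (1 + ε'/8)^2 * (s:ℝ)^2 ≤ (1 + ε) * (4 * ((a:ℝ) * ((s:ℝ) - (a:ℝ)))) := by
      calc (1 + ε'/8)^2 * (s:ℝ)^2 ≤ (1 + ε') * ((s:ℝ)^2 - 1) := hkey
        _ ≤ (1 + ε') * (4 * ((a:ℝ) * ((s:ℝ) - (a:ℝ)))) :=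
            mul_le_mul_of_nonneg_left hparity (by linarith)
        _ ≤ (1 + ε) * (4 * ((a:ℝ) * ((s:ℝ) - (a:ℝ)))) := by
            apply mul_le_mul_of_nonneg_right (by linarith only [hε'le] : (1:ℝ)+ε' ≤ 1+ε)
            have : (0:ℝ) ≤ (a:ℝ) * ((s:ℝ) - (a:ℝ)) := mul_nonneg hapos.le hn2pos.le
            linarith only [this]
    calc (1 + ε'/8)^2 * (betapp t * (s:ℝ) * L)^2
        = ((1 + ε'/8)^2 * (s:ℝ)^2) * (betapp t^2 * L^2) := by ring
      _ ≤ ((1 + ε) * (4 * ((a:ℝ) * ((s:ℝ) - (a:ℝ))))) * (betapp t^2 * L^2) :=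
          mul_le_mul_of_nonneg_right hkey2 (by positivity)
      _ = (1 + ε) * (4 * (betapp t * (a:ℝ) * L) * (betapp t * ((s:ℝ) - (a:ℝ)) * L)) := by
          ring
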